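/- For an integer q ≥ 1, let Δ_q ⊆ ℝ^2 be the rational triangle with vertices (1,1), (1,(q−1)/q), ((q+1)/q, 1) (which has denominator q), let ℓ_q(x) = 2q(1−q)x_1 + q(2q−1)x_2, and let w_q = ℓ_q^2. Then the coefficient of t^{2q−1} in h*_{Δ_q,w_q}(t) equals q^2(−q^2+6q−3) = −q^4+6q^3−3q^2; in particular, for every integer q ≥ 6 this coefficient is negative. -/

import Mathlib

open scoped Pointwise

noncomputable section


lemma hull_char (q : ℕ) (hq : 1 ≤ q) (y : Fin 2 → ℝ) :
    y ∈ convexHull ℝ ({![1, 1], ![1, ((q : ℝ) - 1) / q], ![((q : ℝ) + 1) / q, 1]}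
        : Set (Fin 2 → ℝ)) ↔
    1 ≤ y 0 ∧ y 1 ≤ 1 ∧ (q : ℝ) * (y 0 - y 1) ≤ 1 := by
  have hq0 : (0:ℝ) < q := by exact_mod_cast hq
  constructor
  · intro hy
    have hsub : convexHull ℝ ({![1, 1], ![1, ((q : ℝ) - 1) / q], ![((q : ℝ) + 1) / q, 1]}
        : Set (Fin 2 → ℝ)) ⊆
        {y : Fin 2 → ℝ | 1 ≤ y 0 ∧ y 1 ≤ 1 ∧ (q : ℝ) * (y 0 - y 1) ≤ 1} := by
      refine convexHull_min ?_ ?_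
      · rintro z hz
        simp only [Set.mem_insert_iff, Set.mem_singleton_iff] at hz
        rcases hz with rfl | rfl | rfl <;>
          simp only [Set.mem_setOf_eq, Matrix.cons_val_zero, Matrix.cons_val_one,
            Matrix.head_cons] <;>
          refine ⟨?_, ?_, ?_⟩ <;>
            first
              | (norm_num; done)
              | (rw [div_le_one hq0]; linarith)
              | (rw [le_div_iff₀ hq0]; linarith)
              | (field_simp; done)
              | (field_simp; nlinarith)
              | nlinarith
      · intro u hu v hv a b ha hb hab
        simp only [Set.mem_setOf_eq, Pi.add_apply, Pi.smul_apply, smul_eq_mul] at *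
        obtain ⟨u1, u2, u3⟩ := hu
        obtain ⟨v1, v2, v3⟩ := hv
        refine ⟨by nlinarith, by nlinarith, by nlinarith⟩
    exact hsub hy
  · rintro ⟨h1, h2, h3⟩
    have hw₀ : ∀ i ∈ (Finset.univ : Finset (Fin 3)), 0 ≤
        (![1 - (q:ℝ) * (y 0 - y 1), (q:ℝ) * (1 - y 1), (q:ℝ) * (y 0 - 1)] : Fin 3 → ℝ) i := by
      intro i _
      fin_cases i <;> simp <;> nlinarith
    have hsum : ∑ i : Fin 3,
        (![1 - (q:ℝ) * (y 0 - y 1), (q:ℝ) * (1 - y 1), (q:ℝ) * (y 0 - 1)] : Fin 3 → ℝ) i = 1 := by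
      simp [Fin.sum_univ_three]; ring
    have hz : ∀ i ∈ (Finset.univ : Finset (Fin 3)),
        (![![1, 1], ![1, ((q : ℝ) - 1) / q], ![((q : ℝ) + 1) / q, 1]] : Fin 3 → Fin 2 → ℝ) i ∈
        ({![1, 1], ![1, ((q : ℝ) - 1) / q], ![((q : ℝ) + 1) / q, 1]} : Set (Fin 2 → ℝ)) := by
      intro i _; fin_cases i <;> simp
    have hmem := Finset.centerMass_mem_convexHull Finset.univ hw₀ (by rw [hsum]; norm_num) hz
    rw [Finset.centerMass_eq_of_sum_1 _ _ hsum] at hmem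
    convert hmem using 1
    funext j
    fin_cases j <;>
      · simp [Fin.sum_univ_three, Matrix.cons_val_zero, Matrix.cons_val_one, Matrix.head_cons]
        field_simp
        ring

lemma smul_char (q n : ℕ) (hq : 1 ≤ q) (y : Fin 2 → ℝ) :
    y ∈ (n : ℝ) • convexHull ℝ ({![1, 1], ![1, ((q : ℝ) - 1) / q], ![((q : ℝ) + 1) / q, 1]}
        : Set (Fin 2 → ℝ)) ↔
    (n : ℝ) ≤ y 0 ∧ y 1 ≤ n ∧ (q : ℝ) * (y 0 - y 1) ≤ n := by
  have hq0 : (0:ℝ) < q := by exact_mod_cast hq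
  rcases Nat.eq_zero_or_pos n with rfl | hn
  · have hne : ({![1, 1], ![1, ((q : ℝ) - 1) / q], ![((q : ℝ) + 1) / q, 1]}
        : Set (Fin 2 → ℝ)).Nonempty := ⟨![1, 1], by simp⟩
    rw [Nat.cast_zero, Set.zero_smul_set (convexHull_nonempty_iff.mpr hne)]
    constructor
    · rintro h
      have : y = 0 := h
      subst this
      simp
    · rintro ⟨h1, h2, h3⟩
      have h01 : y 0 ≤ y 1 := by nlinarith
      have e0 : y 0 = 0 := le_antisymm (by linarith) (by linarith)
      have e1 : y 1 = 0 := le_antisymm (by linarith) (by linarith)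
      have : y = 0 := by
        funext i; fin_cases i <;> simpa [e0, e1]
      simp [this]
  · have hn0 : (0:ℝ) < n := by exact_mod_cast hn
    constructor
    · rintro ⟨z, hz, rfl⟩
      obtain ⟨z1, z2, z3⟩ := (hull_char q hq z).mp hz
      simp only [Pi.smul_apply, smul_eq_mul]
      refine ⟨by nlinarith, by nlinarith, by nlinarith⟩
    · rintro ⟨h1, h2, h3⟩
      refine ⟨![y 0 / n, y 1 / n], ?_, ?_⟩
      · rw [hull_char q hq]
        simp only [Matrix.cons_val_zero, Matrix.cons_val_one, Matrix.head_cons]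
        refine ⟨(one_le_div hn0).mpr h1, (div_le_one hn0).mpr h2, ?_⟩
        rw [show (q:ℝ) * (y 0 / n - y 1 / n) = (q:ℝ) * (y 0 - y 1) / n by ring,
          div_le_one hn0]
        exact h3
      · funext i; fin_cases i <;>
          · simp only [Pi.smul_apply, Matrix.cons_val_zero, Matrix.cons_val_one,
              Matrix.head_cons, smul_eq_mul, Fin.zero_eta, Fin.mk_one]
            field_simp

lemma setReal (q n : ℕ) (hq : 1 ≤ q) :
    {x : Fin 2 → ℤ | (fun i => ((x i : ℝ))) ∈ (n : ℝ) •
        convexHull ℝ ({![1, 1], ![1, ((q : ℝ) - 1) / q], ![((q : ℝ) + 1) / q, 1]}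
          : Set (Fin 2 → ℝ))}
    = {x : Fin 2 → ℤ | (n:ℤ) ≤ x 0 ∧ x 1 ≤ (n:ℤ) ∧ (q:ℤ) * (x 0 - x 1) ≤ (n:ℤ)} := by
  ext x
  simp only [Set.mem_setOf_eq, smul_char q n hq]
  constructor
  · rintro ⟨h1, h2, h3⟩
    exact ⟨by exact_mod_cast h1, by exact_mod_cast h2, by exact_mod_cast h3⟩
  · rintro ⟨h1, h2, h3⟩
    exact ⟨by exact_mod_cast h1, by exact_mod_cast h2, by exact_mod_cast h3⟩

lemma setA (q : ℕ) (hq : 1 ≤ q) :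
    {x : Fin 2 → ℤ | ((q-1:ℕ):ℤ) ≤ x 0 ∧ x 1 ≤ ((q-1:ℕ):ℤ) ∧
        (q:ℤ) * (x 0 - x 1) ≤ ((q-1:ℕ):ℤ)}
    = {![(q:ℤ)-1, (q:ℤ)-1]} := by
  have hq' : (1:ℤ) ≤ q := by exact_mod_cast hq
  have hc : ((q-1:ℕ):ℤ) = (q:ℤ) - 1 := by omega
  ext x
  simp only [Set.mem_setOf_eq, Set.mem_singleton_iff, hc]
  constructor
  · rintro ⟨h1, h2, h3⟩
    have hd : x 0 - x 1 ≤ 0 := by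
      by_contra hcon
      push_neg at hcon
      have h2le : (1:ℤ) ≤ x 0 - x 1 := by omega
      have := mul_le_mul_of_nonneg_left h2le (by omega : (0:ℤ) ≤ q)
      linarith
    have e0 : x 0 = (q:ℤ) - 1 := by omega
    have e1 : x 1 = (q:ℤ) - 1 := by omega
    funext i; fin_cases i <;> simpa
  · rintro rfl
    refine ⟨by simp, by simp, ?_⟩
    simp
    nlinarith

lemma setB (q : ℕ) (hq : 1 ≤ q) :
    {x : Fin 2 → ℤ | ((2*q-1:ℕ):ℤ) ≤ x 0 ∧ x 1 ≤ ((2*q-1:ℕ):ℤ) ∧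
        (q:ℤ) * (x 0 - x 1) ≤ ((2*q-1:ℕ):ℤ)}
    = {![2*(q:ℤ)-1, 2*(q:ℤ)-1], ![2*(q:ℤ), 2*(q:ℤ)-1], ![2*(q:ℤ)-1, 2*(q:ℤ)-2]} := by
  have hq' : (1:ℤ) ≤ q := by exact_mod_cast hq
  have hc : ((2*q-1:ℕ):ℤ) = 2*(q:ℤ) - 1 := by omega
  ext x
  simp only [Set.mem_setOf_eq, Set.mem_insert_iff, Set.mem_singleton_iff, hc]
  constructor
  · rintro ⟨h1, h2, h3⟩
    have hub : x 0 - x 1 ≤ 1 := by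
      by_contra hcon
      push_neg at hcon
      have h2le : (2:ℤ) ≤ x 0 - x 1 := by omega
      have := mul_le_mul_of_nonneg_left h2le (by omega : (0:ℤ) ≤ q)
      linarith
    have hcases : (x 0 = 2*(q:ℤ)-1 ∧ x 1 = 2*(q:ℤ)-1) ∨ (x 0 = 2*(q:ℤ) ∧ x 1 = 2*(q:ℤ)-1)
        ∨ (x 0 = 2*(q:ℤ)-1 ∧ x 1 = 2*(q:ℤ)-2) := by omega
    rcases hcases with ⟨e0, e1⟩ | ⟨e0, e1⟩ | ⟨e0, e1⟩
    · exact Or.inl (by funext i; fin_cases i <;> simpa)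
    · exact Or.inr (Or.inl (by funext i; fin_cases i <;> simpa))
    · exact Or.inr (Or.inr (by funext i; fin_cases i <;> simpa))
  · rintro (rfl | rfl | rfl) <;>
      refine ⟨?_, ?_, ?_⟩ <;>
        first
          | (simp; done)
          | (simp <;> omega)
          | (simp; nlinarith)
          | nlinarith

lemma expand5 (q : ℕ) (φ : PowerSeries ℝ) :
    ((1 : PowerSeries ℝ) - PowerSeries.X ^ q) ^ 5 * φ
    = φ - PowerSeries.C (5:ℝ) * (PowerSeries.X ^ q * φ)
      + PowerSeries.X ^ (q * 2) *
        ((10 - 10 * PowerSeries.X ^ q + 5 * (PowerSeries.X ^ q) ^ 2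
          - (PowerSeries.X ^ q) ^ 3) * φ) := by
  have h5 : PowerSeries.C (5:ℝ) = (5 : PowerSeries ℝ) := map_ofNat _ 5
  rw [h5, pow_mul]
  ring

/-- For an integer `q ≥ 1`, let `Δ_q ⊆ ℝ²` be the rational triangle with
vertices `(1,1)`, `(1,(q−1)/q)`, `((q+1)/q,1)` (of denominator `q`), let
`ℓ_q(x) = 2q(1−q)x₁ + q(2q−1)x₂` and `w_q = ℓ_q²`. Then, writing `h` for the weighted
`h*`-polynomial of `Δ_q` (so `(1−t^q)⁵ · Σ_{n≥0}(Σ_{x∈nΔ_q∩ℤ²} ℓ_q(x)²) tⁿ = h(t)`), the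
coefficient of `t^{2q−1}` in `h` equals `−q⁴ + 6q³ − 3q²`; in particular it is negative for
every `q ≥ 6`. -/
theorem rational_triangle_negative_coefficient (q : ℕ) (hq : 1 ≤ q)
    (h : Polynomial ℝ)
    (hh : (1 - PowerSeries.X ^ q) ^ 5 *
        (PowerSeries.mk fun n =>
          ∑ᶠ x ∈ {x : Fin 2 → ℤ | (fun i => ((x i : ℝ))) ∈ (n : ℝ) •
              convexHull ℝ ({![1, 1], ![1, ((q : ℝ) - 1) / q], ![((q : ℝ) + 1) / q, 1]}
                : Set (Fin 2 → ℝ))},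
            (2 * (q : ℝ) * (1 - (q : ℝ)) * (x 0 : ℝ)
              + (q : ℝ) * (2 * (q : ℝ) - 1) * (x 1 : ℝ)) ^ 2) = (h : PowerSeries ℝ)) :
    h.coeff (2 * q - 1) = -(q : ℝ) ^ 4 + 6 * (q : ℝ) ^ 3 - 3 * (q : ℝ) ^ 2 ∧
      (6 ≤ q → h.coeff (2 * q - 1) < 0) := by
  have key := congrArg (PowerSeries.coeff (2 * q - 1)) hh
  rw [expand5] at key
  rw [map_add, map_sub, PowerSeries.coeff_C_mul, PowerSeries.coeff_X_pow_mul',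
    PowerSeries.coeff_X_pow_mul', if_pos (by omega : q ≤ 2 * q - 1),
    if_neg (by omega : ¬ (q * 2 ≤ 2 * q - 1)), add_zero,
    (by omega : 2 * q - 1 - q = q - 1), Polynomial.coeff_coe] at key
  simp only [PowerSeries.coeff_mk] at key
  rw [setReal q (2 * q - 1) hq, setReal q (q - 1) hq, setA q hq, setB q hq] at key
  rw [finsum_mem_singleton] at key
  rw [show ({![2*(q:ℤ)-1, 2*(q:ℤ)-1], ![2*(q:ℤ), 2*(q:ℤ)-1], ![2*(q:ℤ)-1, 2*(q:ℤ)-2]}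
      : Set (Fin 2 → ℤ))
      = (({![2*(q:ℤ)-1, 2*(q:ℤ)-1], ![2*(q:ℤ), 2*(q:ℤ)-1], ![2*(q:ℤ)-1, 2*(q:ℤ)-2]}
      : Finset (Fin 2 → ℤ)) : Set (Fin 2 → ℤ)) from by simp,
    finsum_mem_coe_finset] at key
  have hne1 : (![2*(q:ℤ)-1, 2*(q:ℤ)-1] : Fin 2 → ℤ) ∉
      ({![2*(q:ℤ), 2*(q:ℤ)-1], ![2*(q:ℤ)-1, 2*(q:ℤ)-2]} : Finset (Fin 2 → ℤ)) := by
    simp only [Finset.mem_insert, Finset.mem_singleton]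
    push_neg
    constructor
    · intro hcon; have := congrFun hcon 0; simp at this
    · intro hcon; have := congrFun hcon 1; simp at this
  have hne2 : (![2*(q:ℤ), 2*(q:ℤ)-1] : Fin 2 → ℤ) ∉
      ({![2*(q:ℤ)-1, 2*(q:ℤ)-2]} : Finset (Fin 2 → ℤ)) := by
    simp only [Finset.mem_singleton]
    intro hcon; have := congrFun hcon 0; simp at this; omega
  rw [Finset.sum_insert hne1, Finset.sum_insert hne2, Finset.sum_singleton] at key
  simp only [Matrix.cons_val_zero, Matrix.cons_val_one, Matrix.head_cons] at key
  have main : h.coeff (2 * q - 1) = -(q : ℝ) ^ 4 + 6 * (q : ℝ) ^ 3 - 3 * (q : ℝ) ^ 2 := by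
    rw [← key]
    push_cast
    ring
  refine ⟨main, fun h6 => ?_⟩
  rw [main]
  have h6' : (6:ℝ) ≤ q := by exact_mod_cast h6
  have hprod : 0 ≤ ((q:ℝ) - 6) * (q:ℝ) ^ 3 := mul_nonneg (by linarith) (by positivity)
  have hsq : (0:ℝ) < 3 * (q:ℝ) ^ 2 := by positivity
  nlinarith [hprod, hsq]
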